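/- For every ε > 0 there exists v₀ > 0 such that the sequence (vₙ)_{n ≥ -1} with v₋₁ = 0 and vₙ(v_{n+1} + v_{n-1} + 1) = ε(n+1) for all n ≥ 0 satisfies vₙ > 0 for all n ≥ 0 and, in addition, b_n^{(2j-1)} ≤ vₙ ≤ b_n^{(2j)} for all integers j ≥ 0 and all n ≥ 0. -/

import Mathlib

open Filter


/-- The map `T` acting on sequences: `T(u)₀ = ε/(1+u₁)`,
`T(u)ₙ = ε(n+1)/(1 + u_{n-1} + u_{n+1})` for `n ≥ 1`. -/
noncomputable def Tmap (ε : ℝ) (u : ℕ → ℝ) : ℕ → ℝ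
  | 0 => ε / (1 + u 1)
  | (n+1) => ε * ((n : ℝ) + 2) / (1 + u n + u (n+2))

/-- Shifted bound sequences: `bnd ε k = b^{(k-1)}`, i.e. `bnd ε 0 = b^{(-1)} = 0`
and `bnd ε (k+1) = T (bnd ε k)`, so that `b^{(k)} = bnd ε (k+1)` for `k ≥ -1`. -/
noncomputable def bnd (ε : ℝ) : ℕ → ℕ → ℝ
  | 0 => fun _ => 0
  | (k+1) => Tmap ε (bnd ε k)

/-- Shifted rescaled bounds: `rho ε k n = ρ_n^{(k-1)} = b_n^{(k-1)}/(ε(n+1))`. -/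
noncomputable def rho (ε : ℝ) (k n : ℕ) : ℝ := bnd ε k n / (ε * ((n : ℝ) + 1))

/-- The differences `Δd ε k n = Δ_n^{(k)} = (-1)^k (ρ_n^{(k)} - ρ_n^{(k-1)})` for `k ≥ 0`. -/
noncomputable def Δd (ε : ℝ) (k n : ℕ) : ℝ := (-1 : ℝ)^k * (rho ε (k+1) n - rho ε k n)

lemma bnd_succ (ε : ℝ) (k : ℕ) : bnd ε (k+1) = Tmap ε (bnd ε k) := rfl

lemma Tmap_nonneg {ε : ℝ} (hε : 0 < ε) {u : ℕ → ℝ} (hu : ∀ n, 0 ≤ u n) (n : ℕ) :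
    0 ≤ Tmap ε u n := by
  cases n with
  | zero => exact div_nonneg hε.le (by linarith [hu 1])
  | succ n => exact div_nonneg (by positivity) (by linarith [hu n, hu (n+2)])

lemma Tmap_anti {ε : ℝ} (hε : 0 < ε) {u w : ℕ → ℝ} (hu : ∀ n, 0 ≤ u n)
    (huw : ∀ n, u n ≤ w n) (n : ℕ) : Tmap ε w n ≤ Tmap ε u n := by
  cases n with
  | zero =>
      exact div_le_div_of_nonneg_left hε.le (by linarith [hu 1]) (by linarith [huw 1])
  | succ n =>
      exact div_le_div_of_nonneg_left (by positivity)
        (by linarith [hu n, hu (n+2)]) (by linarith [huw n, huw (n+2)])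

lemma bnd_nonneg {ε : ℝ} (hε : 0 < ε) : ∀ k n, 0 ≤ bnd ε k n
  | 0, _ => le_refl 0
  | (k+1), n => Tmap_nonneg hε (bnd_nonneg hε k) n

lemma bnd_chain {ε : ℝ} (hε : 0 < ε) (j : ℕ) :
    (∀ n, bnd ε (2*j) n ≤ bnd ε (2*j+2) n) ∧ (∀ n, bnd ε (2*j) n ≤ bnd ε (2*j+1) n) ∧
    (∀ n, bnd ε (2*j+3) n ≤ bnd ε (2*j+1) n) := by
  induction j with
  | zero =>
      refine ⟨fun n => ?_, fun n => ?_, fun n => ?_⟩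
      · exact bnd_nonneg hε 2 n
      · exact bnd_nonneg hε 1 n
      · have := Tmap_anti hε (u := bnd ε 0) (w := bnd ε 2) (bnd_nonneg hε 0)
          (fun n => bnd_nonneg hε 2 n) n
        exact this
  | succ j ih =>
      obtain ⟨h1, h2, h3⟩ := ih
      have hB : ∀ n, bnd ε (2*j+2) n ≤ bnd ε (2*j+1) n := fun n => by
        have := Tmap_anti hε (bnd_nonneg hε (2*j)) h2 n
        exact this
      have hB2 : ∀ n, bnd ε (2*j+2) n ≤ bnd ε (2*j+3) n := fun n => by
        have := Tmap_anti hε (bnd_nonneg hε (2*j+2)) hB n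
        exact this
      have hA : ∀ n, bnd ε (2*j+2) n ≤ bnd ε (2*j+4) n := fun n => by
        have := Tmap_anti hε (bnd_nonneg hε (2*j+3)) h3 n
        exact this
      have hC : ∀ n, bnd ε (2*j+5) n ≤ bnd ε (2*j+3) n := fun n => by
        have := Tmap_anti hε (bnd_nonneg hε (2*j+2)) hA n
        exact this
      rw [show 2*(j+1) = 2*j+2 by ring]
      exact ⟨fun n => by rw [show 2*j+2+2 = 2*j+4 by omega]; exact hA n,
        fun n => by rw [show 2*j+2+1 = 2*j+3 by omega]; exact hB2 n,
        fun n => by rw [show 2*j+2+3 = 2*j+5 by omega, show 2*j+2+1 = 2*j+3 by omega]; exact hC n⟩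

lemma bnd_even_mono {ε : ℝ} (hε : 0 < ε) (n : ℕ) : Monotone fun j => bnd ε (2*j) n :=
  monotone_nat_of_le_succ fun j => by
    have := (bnd_chain hε j).1 n
    simpa [Nat.mul_succ] using this

lemma bnd_odd_anti {ε : ℝ} (hε : 0 < ε) (n : ℕ) : Antitone fun j => bnd ε (2*j+1) n :=
  antitone_nat_of_succ_le fun j => by
    have := (bnd_chain hε j).2.2 n
    have e : 2*(j+1)+1 = 2*j+3 := by ring
    simpa [e] using this

lemma bnd_even_le_odd {ε : ℝ} (hε : 0 < ε) (i j n : ℕ) :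
    bnd ε (2*j) n ≤ bnd ε (2*i+1) n :=
  calc bnd ε (2*j) n ≤ bnd ε (2*(max i j)) n := bnd_even_mono hε n (le_max_right i j)
    _ ≤ bnd ε (2*(max i j)+1) n := (bnd_chain hε (max i j)).2.1 n
    _ ≤ bnd ε (2*i+1) n := bnd_odd_anti hε n (le_max_left i j)

lemma bnd_one {ε : ℝ} (n : ℕ) : bnd ε 1 n = ε * ((n:ℝ)+1) := by
  cases n with
  | zero =>
      have : bnd ε 1 0 = ε / (1 + 0) := rfl
      rw [this]; norm_num
  | succ n =>
      have : bnd ε 1 (n+1) = ε * ((n:ℝ)+2) / (1 + 0 + 0) := rfl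
      rw [this]; push_cast; ring

lemma bnd_two_ge {ε : ℝ} (hε : 0 < ε) (n : ℕ) : ε/(1+2*ε) ≤ bnd ε 2 n := by
  have h1 : ∀ m, bnd ε 1 m = ε * ((m:ℝ)+1) := fun m => bnd_one m
  cases n with
  | zero =>
      have : bnd ε 2 0 = ε / (1 + bnd ε 1 1) := rfl
      rw [this, h1 1]
      rw [show ε * (((1:ℕ):ℝ) + 1) = 2*ε by push_cast; ring]
  | succ n =>
      have : bnd ε 2 (n+1) = ε * ((n:ℝ)+2) / (1 + bnd ε 1 n + bnd ε 1 (n+2)) := rfl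
      rw [this, h1 n, h1 (n+2)]
      have hx : (0:ℝ) ≤ (n:ℝ) := Nat.cast_nonneg n
      rw [div_le_div_iff₀ (by positivity) (by push_cast; nlinarith)]
      push_cast
      nlinarith

lemma LU_eq {ε δ : ℝ} (hε : 0 < ε) (hδ : 0 < δ) (L U : ℕ → ℝ)
    (hLδ : ∀ n, δ ≤ L n) (hLU : ∀ n, L n ≤ U n)
    (eqU0 : U 0 * (1 + L 1) = ε) (eqUS : ∀ n, U (n+1) * (1 + L n + L (n+2)) = ε*((n:ℝ)+2))
    (eqL0 : L 0 * (1 + U 1) = ε) (eqLS : ∀ n, L (n+1) * (1 + U n + U (n+2)) = ε*((n:ℝ)+2)) :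
    ∀ n, U n = L n := by
  have hLpos : ∀ n, 0 < L n := fun n => hδ.trans_le (hLδ n)
  have hUpos : ∀ n, 0 < U n := fun n => (hLpos n).trans_le (hLU n)
  set w : ℕ → ℝ := fun n => U n - L n with hw_def
  set s : ℕ → ℝ := fun n => L n * U (n + 1) - U n * L (n + 1) with hs_def
  have hw : ∀ n, 0 ≤ w n := fun n => sub_nonneg.2 (hLU n)
  have hs0 : s 0 = w 0 := by simp only [hs_def, hw_def]; linear_combination eqL0 - eqU0
  have hss : ∀ n, s (n+1) = s n + w (n+1) := fun n => by
    simp only [hs_def, hw_def]; linear_combination eqLS n - eqUS n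
  have hsmono : Monotone s := monotone_nat_of_le_succ fun n => by
    rw [hss n]; linarith [hw (n+1)]
  have hs_nonneg : ∀ n, 0 ≤ s n := fun n =>
    le_trans (by rw [hs0]; exact hw 0) (hsmono (Nat.zero_le n))
  have hLUb : ∀ n, L n * U (n + 1) ≤ ε*((n:ℝ)+1) := by
    intro n
    cases n with
    | zero => push_cast; nlinarith [eqL0, hLpos 0]
    | succ n => push_cast; nlinarith [eqLS n, hLpos (n+1), hUpos n]
  set r : ℕ → ℝ := fun n => U n / L n with hr_def
  have hr1 : ∀ n, 1 ≤ r n := fun n => (one_le_div (hLpos n)).2 (hLU n)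
  have hrstep : ∀ n, r (n+1) - r n = s n / (L n * L (n + 1)) := by
    intro n
    simp only [hr_def, hs_def]
    field_simp [(hLpos n).ne', (hLpos (n+1)).ne']
  have hrmono : Monotone r := monotone_nat_of_le_succ fun n => by
    have h := hrstep n
    have : 0 ≤ s n / (L n * L (n+1)) :=
      div_nonneg (hs_nonneg n) (mul_pos (hLpos n) (hLpos (n+1))).le
    linarith
  have hkey : ∀ n, s n * r (n+1) / (ε*((n:ℝ)+1)) ≤ r (n+1) - r n := by
    intro n
    rw [hrstep n]
    have h1 : L n * L (n+1) * r (n+1) = L n * U (n+1) := by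
      simp only [hr_def]
      rw [mul_assoc, mul_comm (L (n+1)), div_mul_cancel₀ _ (hLpos (n+1)).ne']
    rw [div_le_div_iff₀ (by positivity) (mul_pos (hLpos n) (hLpos (n+1)))]
    calc s n * r (n+1) * (L n * L (n+1)) = s n * (L n * L (n+1) * r (n+1)) := by ring
      _ = s n * (L n * U (n+1)) := by rw [h1]
      _ ≤ s n * (ε*((n:ℝ)+1)) := mul_le_mul_of_nonneg_left (hLUb n) (hs_nonneg n)
  have hstar : ∀ n, s n < ε*((n:ℝ)+1) := by
    intro n
    by_contra h
    push_neg at h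
    have h2 := hkey n
    have hεn : 0 < ε*((n:ℝ)+1) := by positivity
    have h3 : r (n+1) ≤ s n * r (n+1) / (ε*((n:ℝ)+1)) := by
      rw [le_div_iff₀ hεn]
      nlinarith [hr1 (n+1)]
    linarith [hr1 n]
  -- main contradiction argument
  have final : ∀ m : ℕ, 0 < w m → False := by
    intro m hcpos
    have hwsm : w m ≤ s m := by
      cases m with
      | zero => rw [hs0]
      | succ t => rw [hss t]; linarith [hs_nonneg t]
    have hsc : ∀ k, m ≤ k → w m ≤ s k := fun k hk => hwsm.trans (hsmono hk)
    have hgrow : ∀ k, m ≤ k → r k + w m/(ε*((k:ℝ)+1)) ≤ r (k+1) := by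
      intro k hk
      have h2 := hkey k
      have hεk : 0 < ε*((k:ℝ)+1) := by positivity
      have h3 : w m ≤ s k * r (k+1) := by
        calc w m = w m * 1 := (mul_one _).symm
          _ ≤ s k * r (k+1) := mul_le_mul (hsc k hk) (hr1 (k+1)) zero_le_one
              (le_trans hcpos.le (hsc k hk))
      have h4 : w m/(ε*((k:ℝ)+1)) ≤ s k * r (k+1) / (ε*((k:ℝ)+1)) :=
        (div_le_div_iff_of_pos_right hεk).2 h3
      linarith
    have hub : ∀ R : ℝ, ∃ N, m ≤ N ∧ R ≤ r N := by
      intro R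
      set H : ℕ → ℝ := fun k => ∑ i ∈ Finset.range k, (1:ℝ)/(i+1) with hH
      have hcomp : ∀ k, r m + (w m/(ε*((m:ℝ)+2))) * H k ≤ r (m+k) := by
        intro k
        induction k with
        | zero => simp [hH]
        | succ k ih =>
            have h5 := hgrow (m+k) (Nat.le_add_right m k)
            have hineq : w m/(ε*((m:ℝ)+2)) * ((1:ℝ)/((k:ℝ)+1)) ≤ w m/(ε*(((m+k:ℕ):ℝ)+1)) := by
              have hcast : ((m+k : ℕ):ℝ) = (m:ℝ) + k := by push_cast; ring
              rw [hcast, div_mul_div_comm, mul_one]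
              apply div_le_div_of_nonneg_left hcpos.le (by positivity)
              have h6 : (0:ℝ) ≤ (m:ℝ) := Nat.cast_nonneg m
              have h7 : (0:ℝ) ≤ (k:ℝ) := Nat.cast_nonneg k
              nlinarith [hε, mul_nonneg h6 h7]
            have hHsucc : H (k+1) = H k + (1:ℝ)/((k:ℝ)+1) := by
              simp [hH, Finset.sum_range_succ]
            have he : m + (k+1) = (m+k)+1 := by omega
            rw [he, hHsucc]
            have hd : w m/(ε*((m:ℝ)+2)) * (H k + (1:ℝ)/((k:ℝ)+1))
                = w m/(ε*((m:ℝ)+2)) * H k + w m/(ε*((m:ℝ)+2)) * ((1:ℝ)/((k:ℝ)+1)) := by ring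
            rw [hd]
            linarith
      have hHt : Tendsto H atTop atTop := Real.tendsto_sum_range_one_div_nat_succ_atTop
      have hcoef : 0 < w m/(ε*((m:ℝ)+2)) := by positivity
      have htend : Tendsto (fun k => r m + (w m/(ε*((m:ℝ)+2))) * H k) atTop atTop :=
        tendsto_atTop_add_const_left _ _ (hHt.const_mul_atTop hcoef)
      obtain ⟨k, hk⟩ := (htend.eventually_ge_atTop R).exists
      exact ⟨m+k, Nat.le_add_right m k, hk.trans (hcomp k)⟩
    obtain ⟨N, hmN, hrN⟩ := hub (1 + 2*ε/δ)
    have hw2 : ∀ k, N ≤ k → 2*ε ≤ w k := by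
      intro k hk
      have hrk : 1 + 2*ε/δ ≤ r k := hrN.trans (hrmono hk)
      have hUk : U k = L k * r k := by
        rw [eq_comm, hr_def]
        rw [mul_comm, div_mul_cancel₀ _ (hLpos k).ne']
      have h8 : δ * (2*ε/δ) ≤ L k * (r k - 1) :=
        mul_le_mul (hLδ k) (by linarith) (by positivity) (hLpos k).le
      have h9 : δ * (2*ε/δ) = 2*ε := by field_simp
      simp only [hw_def]
      nlinarith [h8, h9, hUk]
    have hslb : ∀ t : ℕ, 2*ε*(t:ℝ) ≤ s (N+t) := by
      intro t
      induction t with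
      | zero => simpa using hs_nonneg N
      | succ t ih =>
          have h10 := hw2 (N+t+1) (by omega)
          have he : N+(t+1) = (N+t)+1 := by omega
          rw [he, hss (N+t)]
          push_cast
          linarith
    have hfin := hstar (N+(N+2))
    have h11 := hslb (N+2)
    have hcast2 : ((N+(N+2) : ℕ):ℝ) = 2*(N:ℝ)+2 := by push_cast; ring
    have hcast3 : ((N+2 : ℕ):ℝ) = (N:ℝ)+2 := by push_cast; ring
    rw [hcast2] at hfin
    rw [hcast3] at h11
    nlinarith [hfin, h11, hε]
  intro n
  by_contra hne
  exact final n (lt_of_le_of_ne (hw n) fun h => hne (by simp only [hw_def] at h; linarith))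


/-- Existence of a positive solution of the dP_I initial value problem that moreover
satisfies the bounds `b_n^{(2j-1)} ≤ vₙ ≤ b_n^{(2j)}`.  Here `v m` denotes `v_{m-1}`. -/
theorem statement3 (ε : ℝ) (hε : 0 < ε) :
    ∃ v : ℕ → ℝ, v 0 = 0 ∧ 0 < v 1 ∧
      (∀ n : ℕ, v (n+1) * (v (n+2) + v n + 1) = ε * ((n : ℝ) + 1)) ∧
      (∀ n : ℕ, 0 < v (n+1)) ∧
      (∀ j n : ℕ, bnd ε (2*j) n ≤ v (n+1) ∧ v (n+1) ≤ bnd ε (2*j+1) n) := by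
  set L : ℕ → ℝ := fun n => ⨆ j, bnd ε (2*j) n with hLdef
  set U : ℕ → ℝ := fun n => ⨅ j, bnd ε (2*j+1) n with hUdef
  have hbddA : ∀ n, BddAbove (Set.range fun j => bnd ε (2*j) n) := by
    intro n
    refine ⟨bnd ε 1 n, ?_⟩
    rintro x ⟨j, rfl⟩
    simpa using bnd_even_le_odd hε 0 j n
  have hbddB : ∀ n, BddBelow (Set.range fun j => bnd ε (2*j+1) n) := by
    intro n
    exact ⟨0, by rintro x ⟨j, rfl⟩; exact bnd_nonneg hε _ n⟩
  have hle_L : ∀ j n, bnd ε (2*j) n ≤ L n := fun j n => le_ciSup (hbddA n) j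
  have hU_le : ∀ j n, U n ≤ bnd ε (2*j+1) n := fun j n => ciInf_le (hbddB n) j
  have hLU : ∀ n, L n ≤ U n := fun n =>
    le_ciInf fun i => ciSup_le fun j => bnd_even_le_odd hε i j n
  have hLδ : ∀ n, ε/(1+2*ε) ≤ L n := fun n =>
    (bnd_two_ge hε n).trans (by simpa using hle_L 1 n)
  have hLpos : ∀ n, 0 < L n := fun n => lt_of_lt_of_le (by positivity) (hLδ n)
  have hUpos : ∀ n, 0 < U n := fun n => (hLpos n).trans_le (hLU n)
  have hLt : ∀ n, Tendsto (fun j => bnd ε (2*j) n) atTop (nhds (L n)) := fun n =>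
    tendsto_atTop_ciSup (bnd_even_mono hε n) (hbddA n)
  have hUt : ∀ n, Tendsto (fun j => bnd ε (2*j+1) n) atTop (nhds (U n)) := fun n =>
    tendsto_atTop_ciInf (bnd_odd_anti hε n) (hbddB n)
  have hTL : ∀ n, Tmap ε L n = U n := by
    intro n
    refine tendsto_nhds_unique ?_ (hUt n)
    cases n with
    | zero =>
        have hfe : (fun j => bnd ε (2*j+1) 0) = fun j => ε / (1 + bnd ε (2*j) 1) := rfl
        have hden : (1:ℝ) + L 1 ≠ 0 := by have := hLpos 1; intro hc; linarith
        have h2 : Tendsto (fun j => ε / (1 + bnd ε (2*j) 1)) atTop (nhds (ε / (1 + L 1))) :=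
          tendsto_const_nhds.div (tendsto_const_nhds.add (hLt 1)) hden
        rw [hfe]
        exact h2
    | succ n =>
        have hfe : (fun j => bnd ε (2*j+1) (n+1))
            = fun j => ε * ((n:ℝ)+2) / (1 + bnd ε (2*j) n + bnd ε (2*j) (n+2)) := rfl
        have hden : (1:ℝ) + L n + L (n+2) ≠ 0 := by
          have := hLpos n; have := hLpos (n+2); intro hc; linarith
        have h2 : Tendsto (fun j => ε * ((n:ℝ)+2) / (1 + bnd ε (2*j) n + bnd ε (2*j) (n+2)))
            atTop (nhds (ε * ((n:ℝ)+2) / (1 + L n + L (n+2)))) :=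
          tendsto_const_nhds.div ((tendsto_const_nhds.add (hLt n)).add (hLt (n+2))) hden
        rw [hfe]
        exact h2
  have hTU : ∀ n, Tmap ε U n = L n := by
    intro n
    have hshift : Tendsto (fun j => bnd ε (2*j+2) n) atTop (nhds (L n)) := by
      have h := (hLt n).comp (tendsto_add_atTop_nat 1)
      have he : ((fun j => bnd ε (2*j) n) ∘ (fun j => j + 1)) = fun j => bnd ε (2*j+2) n := by
        funext j
        simp only [Function.comp_apply]
        rw [show 2*(j+1) = 2*j+2 by ring]
      rwa [he] at h
    refine tendsto_nhds_unique ?_ hshift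
    cases n with
    | zero =>
        have hfe : (fun j => bnd ε (2*j+2) 0) = fun j => ε / (1 + bnd ε (2*j+1) 1) := rfl
        have hden : (1:ℝ) + U 1 ≠ 0 := by have := hUpos 1; intro hc; linarith
        have h2 : Tendsto (fun j => ε / (1 + bnd ε (2*j+1) 1)) atTop (nhds (ε / (1 + U 1))) :=
          tendsto_const_nhds.div (tendsto_const_nhds.add (hUt 1)) hden
        rw [hfe]
        exact h2
    | succ n =>
        have hfe : (fun j => bnd ε (2*j+2) (n+1))
            = fun j => ε * ((n:ℝ)+2) / (1 + bnd ε (2*j+1) n + bnd ε (2*j+1) (n+2)) := rfl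
        have hden : (1:ℝ) + U n + U (n+2) ≠ 0 := by
          have := hUpos n; have := hUpos (n+2); intro hc; linarith
        have h2 : Tendsto (fun j => ε * ((n:ℝ)+2) / (1 + bnd ε (2*j+1) n + bnd ε (2*j+1) (n+2)))
            atTop (nhds (ε * ((n:ℝ)+2) / (1 + U n + U (n+2)))) :=
          tendsto_const_nhds.div ((tendsto_const_nhds.add (hUt n)).add (hUt (n+2))) hden
        rw [hfe]
        exact h2
  have eqU0 : U 0 * (1 + L 1) = ε := by
    have h := hTL 0
    have hd : (0:ℝ) < 1 + L 1 := by linarith [hLpos 1]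
    rw [show Tmap ε L 0 = ε / (1 + L 1) from rfl, eq_comm, eq_div_iff hd.ne'] at h
    linarith [h]
  have eqUS : ∀ n, U (n+1) * (1 + L n + L (n+2)) = ε * ((n:ℝ)+2) := by
    intro n
    have h := hTL (n+1)
    have hd : (0:ℝ) < 1 + L n + L (n+2) := by linarith [hLpos n, hLpos (n+2)]
    rw [show Tmap ε L (n+1) = ε * ((n:ℝ)+2) / (1 + L n + L (n+2)) from rfl,
      eq_comm, eq_div_iff hd.ne'] at h
    linarith [h]
  have eqL0 : L 0 * (1 + U 1) = ε := by
    have h := hTU 0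
    have hd : (0:ℝ) < 1 + U 1 := by linarith [hUpos 1]
    rw [show Tmap ε U 0 = ε / (1 + U 1) from rfl, eq_comm, eq_div_iff hd.ne'] at h
    linarith [h]
  have eqLS : ∀ n, L (n+1) * (1 + U n + U (n+2)) = ε * ((n:ℝ)+2) := by
    intro n
    have h := hTU (n+1)
    have hd : (0:ℝ) < 1 + U n + U (n+2) := by linarith [hUpos n, hUpos (n+2)]
    rw [show Tmap ε U (n+1) = ε * ((n:ℝ)+2) / (1 + U n + U (n+2)) from rfl,
      eq_comm, eq_div_iff hd.ne'] at h
    linarith [h]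
  have hEq : ∀ n, U n = L n := LU_eq hε (by positivity) L U hLδ hLU eqU0 eqUS eqL0 eqLS
  refine ⟨fun n => Nat.rec (motive := fun _ => ℝ) 0 (fun m _ => L m) n, rfl, ?_, ?_, ?_, ?_⟩
  · exact hLpos 0
  · intro n
    cases n with
    | zero =>
        show L 0 * (L 1 + 0 + 1) = ε * (((0:ℕ):ℝ) + 1)
        have h := eqL0
        rw [hEq 1] at h
        push_cast
        linarith [h]
    | succ n =>
        show L (n+1) * (L (n+2) + L n + 1) = ε * (((n+1:ℕ):ℝ) + 1)
        have h := eqLS n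
        rw [hEq n, hEq (n+2)] at h
        push_cast
        linarith [h]
  · intro n
    exact hLpos n
  · intro j n
    refine ⟨hle_L j n, ?_⟩
    show L n ≤ bnd ε (2*j+1) n
    rw [← hEq n]
    exact hU_le j n
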